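/- First derivative test for exponential integrals: if F : [a,b] → ℝ is differentiable with F' monotonic and either F'(x) ≥ m > 0 for all x in [a,b], or F'(x) ≤ -m < 0 for all x in [a,b], then |∫_a^b e^{iF(x)} dx| ≤ 4/m. -/

import Mathlib

open Set MeasureTheory

/-- FTC piece: the integral of `e^{iF} F'` over a subinterval has norm at most 2. -/
lemma vdc_ftc_piece (a b : ℝ) (F F' : ℝ → ℝ)
    (hderiv : ∀ x ∈ Icc a b, HasDerivAt F (F' x) x)
    (p q : ℝ) (hp : p ∈ Icc a b) (hq : q ∈ Icc a b) (hpq : p ≤ q)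
    (hint : IntervalIntegrable (fun x => Complex.exp (Complex.I * (F x : ℂ)) * (F' x : ℂ))
      volume p q) :
    ‖∫ x in p..q, Complex.exp (Complex.I * (F x : ℂ)) * (F' x : ℂ)‖ ≤ 2 := by
  have key : ∀ x ∈ Icc p q,
      HasDerivAt (fun y => -Complex.I * Complex.exp (Complex.I * (F y : ℂ)))
        (Complex.exp (Complex.I * (F x : ℂ)) * (F' x : ℂ)) x := by
    intro x hx
    have hx' : x ∈ Icc a b := ⟨hp.1.trans hx.1, hx.2.trans hq.2⟩
    have h1 : HasDerivAt (fun y => (F y : ℂ)) ((F' x : ℂ)) x := (hderiv x hx').ofReal_comp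
    have h2 : HasDerivAt (fun y => Complex.I * (F y : ℂ)) (Complex.I * (F' x : ℂ)) x :=
      h1.const_mul Complex.I
    have h3 := h2.cexp
    have h4 := h3.const_mul (-Complex.I)
    refine h4.congr_deriv ?_
    have : Complex.I * Complex.I = -1 := Complex.I_mul_I
    linear_combination -(Complex.exp (Complex.I * (F x : ℂ)) * (F' x : ℂ)) * this
  rw [intervalIntegral.integral_eq_sub_of_hasDerivAt (fun x hx => key x (by rwa [uIcc_of_le hpq] at hx)) hint]
  have hn : ∀ r : ℝ, ‖-Complex.I * Complex.exp (Complex.I * (r : ℂ))‖ = 1 := by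
    intro r
    simp [Complex.norm_exp]
  calc ‖-Complex.I * Complex.exp (Complex.I * (F q : ℂ)) -
        -Complex.I * Complex.exp (Complex.I * (F p : ℂ))‖
      ≤ ‖-Complex.I * Complex.exp (Complex.I * (F q : ℂ))‖ +
        ‖-Complex.I * Complex.exp (Complex.I * (F p : ℂ))‖ := norm_sub_le _ _
    _ ≤ 2 := by rw [hn, hn]; norm_num

/-- Core van der Corput bound, in the case `F' ≥ m`. -/
lemma vdc_core (a b m : ℝ) (hab : a ≤ b) (hm : 0 < m) (F F' : ℝ → ℝ)
    (hderiv : ∀ x ∈ Icc a b, HasDerivAt F (F' x) x)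
    (hmono : MonotoneOn F' (Icc a b) ∨ AntitoneOn F' (Icc a b))
    (hb : ∀ x ∈ Icc a b, m ≤ F' x) :
    ‖∫ x in a..b, Complex.exp (Complex.I * (F x : ℂ))‖ ≤ 2 / m := by
  have hinv : ∀ u v : ℝ, 0 < u → u ≤ v → v⁻¹ ≤ u⁻¹ := by
    intro u v hu huv
    rw [inv_eq_one_div, inv_eq_one_div]
    exact one_div_le_one_div_of_le hu huv
  have hmem_a : a ∈ Icc a b := ⟨le_refl a, hab⟩
  have hmem_b : b ∈ Icc a b := ⟨hab, le_refl b⟩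
  have hFpos : ∀ x ∈ Icc a b, 0 < F' x := fun x hx => hm.trans_le (hb x hx)
  set S : Set ℝ := Ioc a b with hSdef
  set T : Set ℝ := Ioc 0 m⁻¹ with hTdef
  set g : ℝ → ℝ := fun x => (F' x)⁻¹ with hgdef
  set c : ℝ → ℂ := fun x => Complex.exp (Complex.I * (F x : ℂ)) * (F' x : ℂ) with hcdef
  have hSsub : S ⊆ Icc a b := Ioc_subset_Icc_self
  have hgpos : ∀ x ∈ Icc a b, 0 < g x := fun x hx => inv_pos.2 (hFpos x hx)
  have hgle : ∀ x ∈ Icc a b, g x ≤ m⁻¹ := fun x hx => hinv m (F' x) hm (hb x hx)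
  set B : ℝ := max (F' a) (F' b) with hBdef
  have hFB : ∀ x ∈ Icc a b, F' x ≤ B := by
    intro x hx
    rcases hmono with h | h
    · exact (h hx hmem_b hx.2).trans (le_max_right _ _)
    · exact (h hmem_a hx hx.1).trans (le_max_left _ _)
  have hB0 : 0 ≤ B := le_trans (hm.le.trans (hb a hmem_a)) (le_max_left _ _)
  have hcB : ∀ x ∈ Icc a b, ‖c x‖ ≤ B := by
    intro x hx
    have h1 : ‖c x‖ = |F' x| := by
      rw [hcdef]
      simp [norm_mul, Complex.norm_exp, Complex.norm_real]
    rw [h1, abs_of_pos (hFpos x hx)]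
    exact hFB x hx
  -- measurability
  have hSmeas : MeasurableSet S := measurableSet_Ioc
  have hF'_ae : AEMeasurable F' (volume.restrict S) := by
    rcases hmono with h | h
    · exact aemeasurable_restrict_of_monotoneOn hSmeas (h.mono hSsub)
    · exact aemeasurable_restrict_of_antitoneOn hSmeas (h.mono hSsub)
  have hg_ae : AEMeasurable g (volume.restrict S) := hF'_ae.inv
  have hF_cont : ContinuousOn F (Icc a b) := fun x hx =>
    (hderiv x hx).continuousAt.continuousWithinAt
  have hc_meas : AEStronglyMeasurable c (volume.restrict S) := by
    have h1 : AEMeasurable F (volume.restrict S) :=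
      (hF_cont.mono hSsub).aemeasurable hSmeas
    have h2 : AEMeasurable (fun x => Complex.exp (Complex.I * (F x : ℂ)))
        (volume.restrict S) :=
      Complex.measurable_exp.comp_aemeasurable
        ((Complex.measurable_ofReal.comp_aemeasurable h1).const_mul Complex.I)
    exact (h2.mul (Complex.measurable_ofReal.comp_aemeasurable hF'_ae)).aestronglyMeasurable
  haveI hSfin : IsFiniteMeasure (volume.restrict S) :=
    ⟨by rw [Measure.restrict_apply_univ]; exact measure_Ioc_lt_top⟩
  haveI hTfin : IsFiniteMeasure (volume.restrict T) :=
    ⟨by rw [Measure.restrict_apply_univ]; exact measure_Ioc_lt_top⟩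
  have hc_int : IntegrableOn c S := by
    refine Integrable.mono' (integrable_const B) hc_meas ?_
    filter_upwards [ae_restrict_mem hSmeas] with x hx
    exact hcB x (hSsub hx)
  -- measurable representatives
  set g' : ℝ → ℝ := hg_ae.mk g with hg'def
  set c' : ℝ → ℂ := hc_meas.mk c with hc'def
  set f : ℝ → ℝ → ℂ := fun x t => if t < g' x then c' x else 0 with hfdef
  have hae_g : g' =ᵐ[volume.restrict S] g := hg_ae.ae_eq_mk.symm
  have hae_c : c' =ᵐ[volume.restrict S] c := hc_meas.ae_eq_mk.symm
  have hAmeas : MeasurableSet {p : ℝ × ℝ | p.2 < g' p.1} :=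
    measurableSet_lt measurable_snd (hg_ae.measurable_mk.comp measurable_fst)
  have hf_sm : StronglyMeasurable (Function.uncurry f) := by
    have heq : Function.uncurry f =
        ({p : ℝ × ℝ | p.2 < g' p.1}).indicator (fun p => c' p.1) := by
      funext p
      by_cases h : p.2 < g' p.1
      · simp [Function.uncurry, hfdef, h, Set.indicator_of_mem (show p ∈ {p : ℝ × ℝ | p.2 < g' p.1} from h)]
      · simp [Function.uncurry, hfdef, h, Set.indicator_of_notMem (show p ∉ {p : ℝ × ℝ | p.2 < g' p.1} from h)]
    rw [heq]
    exact (hc_meas.stronglyMeasurable_mk.comp_measurable measurable_fst).indicator hAmeas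
  -- product integrability
  have hae_prod : ∀ᵐ p : ℝ × ℝ ∂((volume.restrict S).prod (volume.restrict T)),
      g' p.1 = g p.1 ∧ c' p.1 = c p.1 ∧ p.1 ∈ S := by
    have h1 : ∀ᵐ x ∂(volume.restrict S), g' x = g x ∧ c' x = c x ∧ x ∈ S := by
      filter_upwards [hae_g, hae_c, ae_restrict_mem hSmeas] with x h1 h2 h3
      exact ⟨h1, h2, h3⟩
    exact Measure.quasiMeasurePreserving_fst.tendsto_ae.eventually h1
  have hf_int : Integrable (Function.uncurry f)
      ((volume.restrict S).prod (volume.restrict T)) := by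
    refine Integrable.mono' (integrable_const B) hf_sm.aestronglyMeasurable ?_
    filter_upwards [hae_prod] with p hp
    rcases hp with ⟨h1, h2, h3⟩
    by_cases h : p.2 < g' p.1
    · simp only [Function.uncurry, hfdef, if_pos h]
      rw [h2]
      exact hcB p.1 (hSsub h3)
    · simp only [Function.uncurry, hfdef, if_neg h]
      simpa using hB0
  -- inner integral in t
  have key1 : ∀ᵐ x ∂(volume.restrict S),
      (∫ t in T, f x t ∂volume) = Complex.exp (Complex.I * (F x : ℂ)) := by
    filter_upwards [hae_g, hae_c, ae_restrict_mem hSmeas] with x h1 h2 hx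
    have hxI : x ∈ Icc a b := hSsub hx
    have e1 : (fun t => f x t) = fun t => (Iio (g x)).indicator (fun _ => c x) t := by
      funext t
      by_cases h : t < g x
      · simp [hfdef, h1, h2, h, Set.indicator_of_mem (show t ∈ Iio (g x) from h)]
      · simp [hfdef, h1, h2, h, Set.indicator_of_notMem (show t ∉ Iio (g x) from h)]
    rw [e1, setIntegral_indicator measurableSet_Iio]
    have e2 : T ∩ Iio (g x) = Ioo 0 (g x) := by
      ext t
      simp only [hTdef, mem_inter_iff, mem_Ioc, mem_Iio, mem_Ioo]
      constructor
      · rintro ⟨⟨h1', _⟩, h3'⟩; exact ⟨h1', h3'⟩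
      · rintro ⟨h1', h2'⟩; exact ⟨⟨h1', h2'.le.trans (hgle x hxI)⟩, h2'⟩
    rw [e2, setIntegral_const, Real.volume_real_Ioo,
      max_eq_left (by simpa using (hgpos x hxI).le)]
    rw [sub_zero, hgdef, hcdef]
    simp only [Complex.real_smul, Complex.ofReal_inv]
    have hne : (F' x : ℂ) ≠ 0 := by
      simpa using (hFpos x hxI).ne'
    field_simp
  -- inner integral in x, for each t
  have key2 : ∀ t : ℝ, ‖∫ x in S, f x t ∂volume‖ ≤ 2 := by
    intro t
    set St : Set ℝ := {x | x ∈ S ∧ t < g x} with hStdef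
    have hStS : St ⊆ S := fun x hx => hx.1
    have hStIcc : St ⊆ Icc a b := fun x hx => hSsub hx.1
    have hOrd : OrdConnected St := by
      constructor
      intro x hx y hy z hz
      have hzI : z ∈ Icc a b := ⟨hx.1.1.le.trans hz.1, hz.2.trans hy.1.2⟩
      refine ⟨⟨lt_of_lt_of_le hx.1.1 hz.1, hz.2.trans hy.1.2⟩, ?_⟩
      rcases hmono with h | h
      · have h1 : F' z ≤ F' y := h hzI (hSsub hy.1) hz.2
        exact lt_of_lt_of_le hy.2 (hinv (F' z) (F' y) (hFpos z hzI) h1)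
      · have h1 : F' z ≤ F' x := h (hSsub hx.1) hzI hz.1
        exact lt_of_lt_of_le hx.2 (hinv (F' z) (F' x) (hFpos z hzI) h1)
    have hStmeas : MeasurableSet St := hOrd.measurableSet
    have e1 : (∫ x in S, f x t ∂volume) = ∫ x in S, St.indicator c x ∂volume := by
      apply integral_congr_ae
      filter_upwards [hae_g, hae_c, ae_restrict_mem hSmeas] with x h1 h2 hx
      by_cases h : t < g x
      · simp only [hfdef, h1, h2]
        rw [if_pos h, Set.indicator_of_mem (show x ∈ St from ⟨hx, h⟩)]
      · simp only [hfdef, h1, h2]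
        rw [if_neg h, Set.indicator_of_notMem (show x ∉ St from fun hmem => h hmem.2)]
    have e2 : (∫ x in S, St.indicator c x ∂volume) = ∫ x in St, c x ∂volume := by
      rw [integral_indicator hStmeas, Measure.restrict_restrict hStmeas,
        inter_eq_self_of_subset_left hStS]
    rw [e1, e2]
    rcases eq_empty_or_nonempty St with hemp | hne
    · rw [hemp]; simp
    · obtain ⟨x0, hx0⟩ := hne
      have hbdd : BddBelow St := ⟨a, fun x hx => (hStIcc hx).1⟩
      have hbdda : BddAbove St := ⟨b, fun x hx => (hStIcc hx).2⟩
      set p := sInf St with hpdef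
      set q := sSup St with hqdef
      have hap : a ≤ p := le_csInf ⟨x0, hx0⟩ fun x hx => (hStIcc hx).1
      have hpb : p ≤ b := (csInf_le hbdd hx0).trans (hStIcc hx0).2
      have haq : a ≤ q := ((hStIcc hx0).1).trans (le_csSup hbdda hx0)
      have hqb : q ≤ b := csSup_le ⟨x0, hx0⟩ fun x hx => (hStIcc hx).2
      have hpq : p ≤ q := (csInf_le hbdd hx0).trans (le_csSup hbdda hx0)
      have hIoo : Ioo p q ⊆ St := by
        intro y hy
        obtain ⟨x1, hx1, hx1y⟩ := (csInf_lt_iff hbdd ⟨x0, hx0⟩).1 hy.1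
        obtain ⟨x3, hx3, hyx3⟩ := (lt_csSup_iff hbdda ⟨x0, hx0⟩).1 hy.2
        have hyS : y ∈ S := ⟨hx1.1.1.trans hx1y, hyx3.le.trans (hStIcc hx3).2⟩
        have hyI : y ∈ Icc a b := hSsub hyS
        refine ⟨hyS, ?_⟩
        rcases hmono with h | h
        · have h1 : F' y ≤ F' x3 := h hyI (hStIcc hx3) hyx3.le
          exact lt_of_lt_of_le hx3.2 (hinv _ _ (hFpos y hyI) h1)
        · have h1 : F' y ≤ F' x1 := h (hStIcc hx1) hyI hx1y.le
          exact lt_of_lt_of_le hx1.2 (hinv _ _ (hFpos y hyI) h1)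
      have hSubIcc : St ⊆ Icc p q := fun x hx => ⟨csInf_le hbdd hx, le_csSup hbdda hx⟩
      have haeSt : St =ᵐ[volume] Ioo p q := by
        rw [MeasureTheory.ae_eq_set]
        constructor
        · refine measure_mono_null (fun x hx => ?_)
            (((Set.finite_singleton q).insert p).measure_zero volume)
          have h1 := hSubIcc hx.1
          have h2 := hx.2
          simp only [mem_Ioo, not_and_or, not_lt] at h2
          rcases h2 with h2 | h2
          · exact Or.inl (le_antisymm h2 h1.1)
          · exact Or.inr (le_antisymm h1.2 h2)
        · rw [diff_eq_empty.2 hIoo]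
          exact measure_empty
      rw [setIntegral_congr_set haeSt, ← integral_Ioc_eq_integral_Ioo,
        ← intervalIntegral.integral_of_le hpq]
      have hint : IntervalIntegrable c volume p q := by
        rw [intervalIntegrable_iff_integrableOn_Ioc_of_le hpq]
        exact hc_int.mono_set (Ioc_subset_Ioc hap hqb)
      have := vdc_ftc_piece a b F F' hderiv p q ⟨hap, hpb⟩ ⟨haq, hqb⟩ hpq
        (by simpa only [hcdef] using hint)
      simpa only [hcdef] using this
  -- putting it together
  calc ‖∫ x in a..b, Complex.exp (Complex.I * (F x : ℂ))‖
      = ‖∫ x in S, Complex.exp (Complex.I * (F x : ℂ)) ∂volume‖ := by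
        rw [intervalIntegral.integral_of_le hab]
    _ = ‖∫ x in S, (∫ t in T, f x t ∂volume) ∂volume‖ := by
        rw [integral_congr_ae key1]
    _ = ‖∫ t in T, (∫ x in S, f x t ∂volume) ∂volume‖ := by
        rw [integral_integral_swap hf_int]
    _ ≤ 2 * (volume T).toReal :=
        norm_setIntegral_le_of_norm_le_const_ae' measure_Ioc_lt_top
          (Filter.Eventually.of_forall fun t _ => key2 t)
    _ ≤ 2 / m := by
        rw [hTdef, Real.volume_Ioc,
          ENNReal.toReal_ofReal (by rw [sub_zero]; positivity)]
        rw [sub_zero, div_eq_mul_inv]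

theorem first_derivative_test_exponential_integral
    (a b m : ℝ) (hab : a ≤ b) (hm : 0 < m) (F F' : ℝ → ℝ)
    (hderiv : ∀ x ∈ Icc a b, HasDerivAt F (F' x) x)
    (hmono : MonotoneOn F' (Icc a b) ∨ AntitoneOn F' (Icc a b))
    (hbound : (∀ x ∈ Icc a b, m ≤ F' x) ∨ (∀ x ∈ Icc a b, F' x ≤ -m)) :
    ‖∫ x in a..b, Complex.exp (Complex.I * (F x : ℂ))‖ ≤ 4 / m := by
  have h24 : (2 : ℝ) / m ≤ 4 / m := by
    gcongr; norm_num
  rcases hbound with hb | hb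
  · exact (vdc_core a b m hab hm F F' hderiv hmono hb).trans h24
  · -- conjugate trick: replace F by -F
    have key := vdc_core a b m hab hm (fun x => -F x) (fun x => -F' x)
      (fun x hx => (hderiv x hx).neg)
      (by rcases hmono with h | h
          · exact Or.inr h.neg
          · exact Or.inl h.neg)
      (fun x hx => by have := hb x hx; simpa using by linarith)
    refine le_trans ?_ (key.trans h24)
    have hconj : ∀ x : ℝ, Complex.exp (Complex.I * ((-F x : ℝ) : ℂ)) =
        (starRingEnd ℂ) (Complex.exp (Complex.I * (F x : ℂ))) := by
      intro x
      rw [← Complex.exp_conj, map_mul, Complex.conj_I, Complex.conj_ofReal,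
        Complex.ofReal_neg]
      congr 1
      ring
    have : (∫ x in a..b, Complex.exp (Complex.I * ((-F x : ℝ) : ℂ))) =
        (starRingEnd ℂ) (∫ x in a..b, Complex.exp (Complex.I * (F x : ℂ))) := by
      rw [intervalIntegral.integral_of_le hab, intervalIntegral.integral_of_le hab,
        ← integral_conj]
      exact integral_congr_ae (Filter.Eventually.of_forall fun x => hconj x)
    rw [this, RCLike.norm_conj]
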